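/- Suppose Y and X are conditionally independent given BᵀX. Then for each fixed 0 < τ < 1 the conditional expectile f_τ(X) is conditionally independent of X given BᵀX. -/

import Mathlib

open MeasureTheory ProbabilityTheory Matrix

/-- The asymmetric squared-error loss `φ_τ`. -/
noncomputable def phiLoss (τ c : ℝ) : ℝ := if c ≤ 0 then (1 - τ) * c ^ 2 else τ * c ^ 2

/-- `a` is the `τ`-th expectile of the measure `ν`: it is the unique minimizer of the
asymmetric squared-error risk `b ↦ ∫ φ_τ(y - b) ν(dy)`. -/
def IsExpectile (τ : ℝ) (ν : MeasureTheory.Measure ℝ) (a : ℝ) : Prop :=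
  ∀ b : ℝ, b ≠ a → ∫ y, phiLoss τ (y - a) ∂ν < ∫ y, phiLoss τ (y - b) ∂ν

section Expectile

variable {τ : ℝ}

lemma phiLoss_nonneg (hτ0 : 0 < τ) (hτ1 : τ < 1) (c : ℝ) : 0 ≤ phiLoss τ c := by
  unfold phiLoss; split <;> nlinarith [sq_nonneg c]

lemma phiLoss_le_sq (hτ0 : 0 < τ) (hτ1 : τ < 1) (c : ℝ) : phiLoss τ c ≤ c ^ 2 := by
  unfold phiLoss; split <;> nlinarith [sq_nonneg c]

lemma min_sq_le_phiLoss (c : ℝ) : min τ (1 - τ) * c ^ 2 ≤ phiLoss τ c := by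
  unfold phiLoss; split
  · exact mul_le_mul_of_nonneg_right (min_le_right _ _) (sq_nonneg c)
  · exact mul_le_mul_of_nonneg_right (min_le_left _ _) (sq_nonneg c)

lemma measurable_phiLoss : Measurable (phiLoss τ) := by
  unfold phiLoss
  exact Measurable.ite (measurableSet_le measurable_id measurable_const)
    ((measurable_id.pow_const 2).const_mul _) ((measurable_id.pow_const 2).const_mul _)

lemma phiLoss_grad (hτ0 : 0 < τ) (hτ1 : τ < 1) (c d : ℝ) :
    phiLoss τ c + (2 * τ * max c 0 - 2 * (1 - τ) * max (-c) 0) * (d - c) ≤ phiLoss τ d := by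
  unfold phiLoss
  rcases le_or_gt c 0 with hc | hc <;> rcases le_or_gt d 0 with hd | hd <;>
    simp only [if_pos, if_neg, hc, hd, not_le, le_refl, if_true]
  · rw [max_eq_right hc, max_eq_left (by linarith : (0:ℝ) ≤ -c)]
    nlinarith [sq_nonneg (d - c)]
  · rw [max_eq_right hc, max_eq_left (by linarith : (0:ℝ) ≤ -c)]
    nlinarith [mul_nonneg hd.le (neg_nonneg.mpr hc), sq_nonneg c, sq_nonneg d]
  · rw [max_eq_left hc.le, max_eq_right (by linarith : -c ≤ 0)]
    nlinarith [mul_nonneg (neg_nonneg.mpr hd) hc.le, sq_nonneg c, sq_nonneg d]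
  · rw [max_eq_left hc.le, max_eq_right (by linarith : -c ≤ 0)]
    nlinarith [sq_nonneg (d - c)]

end Expectile

noncomputable def Hfun (τ : ℝ) (ν : MeasureTheory.Measure ℝ) (x : ℝ) : ℝ :=
  (1 - τ) * ∫ y, max (x - y) 0 ∂ν - τ * ∫ y, max (y - x) 0 ∂ν

noncomputable def Rfun (τ : ℝ) (ν : MeasureTheory.Measure ℝ) (x : ℝ) : ℝ :=
  ∫ y, phiLoss τ (y - x) ∂ν

def Qset (τ : ℝ) (ν : MeasureTheory.Measure ℝ) : Set ℝ :=
  {x | ENNReal.ofReal τ * ∫⁻ y, ENNReal.ofReal (y - x) ∂ν ≤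
    ENNReal.ofReal (1 - τ) * ∫⁻ y, ENNReal.ofReal (x - y) ∂ν}

noncomputable def expFun (τ : ℝ) {α : Type*} [MeasurableSpace α]
    (κ : ProbabilityTheory.Kernel α ℝ) (z : α) : ℝ :=
  if ∫⁻ y, ENNReal.ofReal (y ^ 2) ∂(κ z) < ⊤ then sInf (Qset τ (κ z)) else 0

section MeasureLemmas

variable {τ : ℝ} {ν : MeasureTheory.Measure ℝ} [IsProbabilityMeasure ν]

lemma integrable_sq_of_lintegral_sq_lt_top (h : ∫⁻ y, ENNReal.ofReal (y ^ 2) ∂ν < ⊤) :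
    Integrable (fun y : ℝ => y ^ 2) ν := by
  refine ⟨(measurable_id.pow_const 2).aestronglyMeasurable, ?_⟩
  rw [hasFiniteIntegral_iff_ofReal (Filter.Eventually.of_forall fun y => sq_nonneg y)]
  exact h

lemma lintegral_sq_lt_top_of_integrable (h : Integrable (fun y : ℝ => y ^ 2) ν) :
    ∫⁻ y, ENNReal.ofReal (y ^ 2) ∂ν < ⊤ := by
  rw [← hasFiniteIntegral_iff_ofReal (Filter.Eventually.of_forall fun y => sq_nonneg y)]
  exact h.2

lemma integrable_abs_of_sq (h2 : Integrable (fun y : ℝ => y ^ 2) ν) :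
    Integrable (fun y : ℝ => |y|) ν := by
  refine Integrable.mono' (h2.add (integrable_const 1)) measurable_abs.aestronglyMeasurable ?_
  refine Filter.Eventually.of_forall fun y => ?_
  simp only [Pi.add_apply]
  rw [norm_abs_eq_norm, Real.norm_eq_abs]
  nlinarith [sq_nonneg (|y| - 1), abs_nonneg y, sq_abs y]

lemma integrable_id_of_sq (h2 : Integrable (fun y : ℝ => y ^ 2) ν) :
    Integrable (fun y : ℝ => y) ν := by
  refine Integrable.mono' (integrable_abs_of_sq h2) measurable_id.aestronglyMeasurable ?_
  exact Filter.Eventually.of_forall fun y => le_of_eq (Real.norm_eq_abs y)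

lemma integrable_max_left (h2 : Integrable (fun y : ℝ => y ^ 2) ν) (x : ℝ) :
    Integrable (fun y : ℝ => max (y - x) 0) ν := by
  refine Integrable.mono' ((integrable_abs_of_sq h2).add (integrable_const |x|))
    ((measurable_id.sub_const x).max measurable_const).aestronglyMeasurable ?_
  refine Filter.Eventually.of_forall fun y => ?_
  simp only [Pi.add_apply]
  rw [Real.norm_eq_abs, abs_of_nonneg (le_max_right _ _)]
  have h1 := le_abs_self y
  have h2 := neg_le_abs x
  have h3 := abs_nonneg y
  have h4 := abs_nonneg x
  rcases le_total (y - x) 0 with h | h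
  · rw [max_eq_right h]; linarith
  · rw [max_eq_left h]; linarith

lemma integrable_max_right (h2 : Integrable (fun y : ℝ => y ^ 2) ν) (x : ℝ) :
    Integrable (fun y : ℝ => max (x - y) 0) ν := by
  refine Integrable.mono' ((integrable_abs_of_sq h2).add (integrable_const |x|))
    ((measurable_const.sub measurable_id).max measurable_const).aestronglyMeasurable ?_
  refine Filter.Eventually.of_forall fun y => ?_
  simp only [Pi.add_apply]
  rw [Real.norm_eq_abs, abs_of_nonneg (le_max_right _ _)]
  have h1 := neg_le_abs y
  have h2 := le_abs_self x
  have h3 := abs_nonneg y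
  have h4 := abs_nonneg x
  rcases le_total (x - y) 0 with h | h
  · rw [max_eq_right h]; linarith
  · rw [max_eq_left h]; linarith

lemma integrable_phiLoss_shift (hτ0 : 0 < τ) (hτ1 : τ < 1)
    (h2 : Integrable (fun y : ℝ => y ^ 2) ν) (x : ℝ) :
    Integrable (fun y : ℝ => phiLoss τ (y - x)) ν := by
  refine Integrable.mono' ((h2.const_mul 2).add (integrable_const (2 * x ^ 2)))
    (measurable_phiLoss.comp (measurable_id.sub_const x)).aestronglyMeasurable ?_
  refine Filter.Eventually.of_forall fun y => ?_
  simp only [Pi.add_apply]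
  rw [Real.norm_eq_abs, abs_of_nonneg (phiLoss_nonneg hτ0 hτ1 _)]
  have h1 := phiLoss_le_sq hτ0 hτ1 (y - x)
  nlinarith [sq_nonneg (y + x)]

end MeasureLemmas

section Core

variable {τ : ℝ} {ν : MeasureTheory.Measure ℝ} [IsProbabilityMeasure ν]

/-- gradient inequality for the risk. -/
lemma gradR (hτ0 : 0 < τ) (hτ1 : τ < 1) (h2 : Integrable (fun y : ℝ => y ^ 2) ν) (x h : ℝ) :
    2 * h * Hfun τ ν x ≤ Rfun τ ν (x + h) - Rfun τ ν x := by
  have hA := integrable_max_left h2 x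
  have hB := integrable_max_right h2 x
  have hR1 := integrable_phiLoss_shift hτ0 hτ1 h2 (x + h)
  have hR0 := integrable_phiLoss_shift hτ0 hτ1 h2 x
  have key : ∀ y : ℝ, phiLoss τ (y - x) +
      (2 * τ * max (y - x) 0 - 2 * (1 - τ) * max (x - y) 0) * (-h) ≤ phiLoss τ (y - (x + h)) := by
    intro y
    have := phiLoss_grad hτ0 hτ1 (y - x) (y - (x + h))
    have hmax : max (-(y - x)) 0 = max (x - y) 0 := by ring_nf
    rw [hmax] at this
    have harg : y - (x + h) - (y - x) = -h := by ring
    rw [harg] at this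
    exact this
  have hsub : Integrable (fun y : ℝ =>
      2 * τ * max (y - x) 0 - 2 * (1 - τ) * max (x - y) 0) ν :=
    (hA.const_mul (2 * τ)).sub (hB.const_mul (2 * (1 - τ)))
  have hsub2 : Integrable (fun y : ℝ =>
      (2 * τ * max (y - x) 0 - 2 * (1 - τ) * max (x - y) 0) * (-h)) ν := hsub.mul_const (-h)
  have hint : Integrable (fun y : ℝ =>
      phiLoss τ (y - x) + (2 * τ * max (y - x) 0 - 2 * (1 - τ) * max (x - y) 0) * (-h)) ν :=
    hR0.add hsub2
  have hmono := integral_mono hint hR1 key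
  rw [integral_add hR0 hsub2, integral_mul_const,
    integral_sub (hA.const_mul (2 * τ) : Integrable (fun y : ℝ => 2 * τ * max (y - x) 0) ν)
      (hB.const_mul (2 * (1 - τ)) : Integrable (fun y : ℝ => 2 * (1 - τ) * max (x - y) 0) ν),
    integral_const_mul, integral_const_mul] at hmono
  unfold Rfun Hfun
  nlinarith [hmono]

lemma gradR' (hτ0 : 0 < τ) (hτ1 : τ < 1) (h2 : Integrable (fun y : ℝ => y ^ 2) ν) (x h : ℝ) :
    Rfun τ ν (x + h) - Rfun τ ν x ≤ 2 * h * Hfun τ ν (x + h) := by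
  have := gradR hτ0 hτ1 h2 (x + h) (-h)
  have harg : x + h + -h = x := by ring
  rw [harg] at this
  linarith

lemma Hfun_lip (hτ0 : 0 < τ) (hτ1 : τ < 1) (h2 : Integrable (fun y : ℝ => y ^ 2) ν)
    {x x' : ℝ} (hxx : x ≤ x') :
    min τ (1 - τ) * (x' - x) ≤ Hfun τ ν x' - Hfun τ ν x ∧
      Hfun τ ν x' - Hfun τ ν x ≤ max τ (1 - τ) * (x' - x) := by
  have hAx := integrable_max_left h2 x
  have hAx' := integrable_max_left h2 x'
  have hBx := integrable_max_right h2 x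
  have hBx' := integrable_max_right h2 x'
  set u : ℝ → ℝ := fun y => max (x' - y) 0 - max (x - y) 0 with hu
  set v : ℝ → ℝ := fun y => max (y - x) 0 - max (y - x') 0 with hv
  have hu_nonneg : ∀ y, 0 ≤ u y := fun y =>
    sub_nonneg.mpr (max_le_max (by linarith) le_rfl)
  have hv_nonneg : ∀ y, 0 ≤ v y := fun y =>
    sub_nonneg.mpr (max_le_max (by linarith) le_rfl)
  have huv : ∀ y, u y + v y = x' - x := by
    intro y
    have h1 : max (x' - y) 0 - max (y - x') 0 = x' - y := by
      have := max_zero_sub_max_neg_zero_eq_self (x' - y)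
      rw [show -(x' - y) = y - x' by ring] at this
      exact this
    have h2 : max (y - x) 0 - max (x - y) 0 = y - x := by
      have := max_zero_sub_max_neg_zero_eq_self (y - x)
      rw [show -(y - x) = x - y by ring] at this
      exact this
    simp only [hu, hv]
    linarith
  have hints : Integrable (fun y => (1 - τ) * u y + τ * v y) ν :=
    (((hBx'.sub hBx).const_mul (1 - τ)).add ((hAx.sub hAx').const_mul τ))
  have hHdiff : Hfun τ ν x' - Hfun τ ν x = ∫ y, ((1 - τ) * u y + τ * v y) ∂ν := by
    have i1 : Integrable (fun y => (1 - τ) * u y) ν := (hBx'.sub hBx).const_mul (1 - τ)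
    have i2 : Integrable (fun y => τ * v y) ν := (hAx.sub hAx').const_mul τ
    have iu : Integrable u ν := hBx'.sub hBx
    have iv : Integrable v ν := hAx.sub hAx'
    rw [integral_add i1 i2, integral_const_mul, integral_const_mul,
      show ∫ y, u y ∂ν = ∫ y, ((fun y => max (x' - y) 0) y - (fun y => max (x - y) 0) y) ∂ν from rfl,
      show ∫ y, v y ∂ν = ∫ y, ((fun y => max (y - x) 0) y - (fun y => max (y - x') 0) y) ∂ν from rfl,
      integral_sub hBx' hBx, integral_sub hAx hAx']
    unfold Hfun
    ring
  constructor
  · rw [hHdiff]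
    have : min τ (1 - τ) * (x' - x) = ∫ _, min τ (1 - τ) * (x' - x) ∂ν := by
      rw [integral_const]; simp
    rw [this]
    refine integral_mono (integrable_const _) hints fun y => ?_
    have h1 : min τ (1 - τ) * (x' - x) = min τ (1 - τ) * (u y + v y) := by rw [huv y]
    rw [h1]
    have hm1 : min τ (1 - τ) ≤ 1 - τ := min_le_right _ _
    have hm2 : min τ (1 - τ) ≤ τ := min_le_left _ _
    nlinarith [hu_nonneg y, hv_nonneg y]
  · rw [hHdiff]
    have : max τ (1 - τ) * (x' - x) = ∫ _, max τ (1 - τ) * (x' - x) ∂ν := by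
      rw [integral_const]; simp
    rw [this]
    refine integral_mono hints (integrable_const _) fun y => ?_
    have h1 : max τ (1 - τ) * (x' - x) = max τ (1 - τ) * (u y + v y) := by rw [huv y]
    rw [h1]
    have hm1 : 1 - τ ≤ max τ (1 - τ) := le_max_right _ _
    have hm2 : τ ≤ max τ (1 - τ) := le_max_left _ _
    nlinarith [hu_nonneg y, hv_nonneg y]

end Core

section Qset

variable {τ : ℝ} {ν : MeasureTheory.Measure ℝ} [IsProbabilityMeasure ν]

lemma ofReal_eq_ofReal_max (c : ℝ) : ENNReal.ofReal c = ENNReal.ofReal (max c 0) := by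
  rcases le_total c 0 with h | h
  · rw [ENNReal.ofReal_of_nonpos h, max_eq_right h, ENNReal.ofReal_zero]
  · rw [max_eq_left h]

lemma lintegral_ofReal_sub_left (h2 : Integrable (fun y : ℝ => y ^ 2) ν) (x : ℝ) :
    ∫⁻ y, ENNReal.ofReal (y - x) ∂ν = ENNReal.ofReal (∫ y, max (y - x) 0 ∂ν) := by
  rw [ofReal_integral_eq_lintegral_ofReal (integrable_max_left h2 x)
    (Filter.Eventually.of_forall fun y => le_max_right _ _)]
  exact lintegral_congr fun y => ofReal_eq_ofReal_max _

lemma lintegral_ofReal_sub_right (h2 : Integrable (fun y : ℝ => y ^ 2) ν) (x : ℝ) :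
    ∫⁻ y, ENNReal.ofReal (x - y) ∂ν = ENNReal.ofReal (∫ y, max (x - y) 0 ∂ν) := by
  rw [ofReal_integral_eq_lintegral_ofReal (integrable_max_right h2 x)
    (Filter.Eventually.of_forall fun y => le_max_right _ _)]
  exact lintegral_congr fun y => ofReal_eq_ofReal_max _

lemma mem_Qset_iff (hτ0 : 0 < τ) (hτ1 : τ < 1) (h2 : Integrable (fun y : ℝ => y ^ 2) ν) (x : ℝ) :
    x ∈ Qset τ ν ↔ 0 ≤ Hfun τ ν x := by
  have hB : (0:ℝ) ≤ ∫ y, max (x - y) 0 ∂ν :=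
    integral_nonneg fun y => le_max_right _ _
  unfold Qset Hfun
  rw [Set.mem_setOf_eq, lintegral_ofReal_sub_left h2 x, lintegral_ofReal_sub_right h2 x,
    ← ENNReal.ofReal_mul hτ0.le, ← ENNReal.ofReal_mul (by linarith : (0:ℝ) ≤ 1 - τ),
    ENNReal.ofReal_le_ofReal_iff (mul_nonneg (by linarith) hB)]
  constructor <;> intro h <;> linarith

lemma Qset_upclosed {x x' : ℝ} (hx : x ∈ Qset τ ν) (hxx : x ≤ x') : x' ∈ Qset τ ν := by
  unfold Qset at hx ⊢
  rw [Set.mem_setOf_eq] at hx ⊢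
  calc ENNReal.ofReal τ * ∫⁻ y, ENNReal.ofReal (y - x') ∂ν
      ≤ ENNReal.ofReal τ * ∫⁻ y, ENNReal.ofReal (y - x) ∂ν :=
        mul_le_mul_right (lintegral_mono fun y => ENNReal.ofReal_le_ofReal (by linarith)) _
    _ ≤ ENNReal.ofReal (1 - τ) * ∫⁻ y, ENNReal.ofReal (x - y) ∂ν := hx
    _ ≤ ENNReal.ofReal (1 - τ) * ∫⁻ y, ENNReal.ofReal (x' - y) ∂ν :=
        mul_le_mul_right (lintegral_mono fun y => ENNReal.ofReal_le_ofReal (by linarith)) _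

lemma Qset_nonempty_rat (hτ0 : 0 < τ) (hτ1 : τ < 1)
    (h2 : Integrable (fun y : ℝ => y ^ 2) ν) : ∃ q : ℚ, (q : ℝ) ∈ Qset τ ν := by
  set m := ∫ y, y ∂ν with hm
  set c := ∫ y, |y| ∂ν with hc
  have hc0 : 0 ≤ c := integral_nonneg fun y => abs_nonneg y
  obtain ⟨q, hq⟩ := exists_rat_gt (max 0 (m + τ * c / (1 - τ)))
  have hq0 : (0:ℝ) ≤ q := le_of_lt (lt_of_le_of_lt (le_max_left _ _) hq)
  have hqm : m + τ * c / (1 - τ) < q := lt_of_le_of_lt (le_max_right _ _) hq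
  refine ⟨q, (mem_Qset_iff hτ0 hτ1 h2 _).mpr ?_⟩
  unfold Hfun
  have hA : ∫ y, max (y - (q:ℝ)) 0 ∂ν ≤ c := by
    refine integral_mono (integrable_max_left h2 _) (integrable_abs_of_sq h2) fun y => ?_
    rcases le_total (y - (q:ℝ)) 0 with h | h
    · rw [max_eq_right h]; exact abs_nonneg y
    · rw [max_eq_left h]
      have := le_abs_self y
      linarith
  have hB : (q:ℝ) - m ≤ ∫ y, max ((q:ℝ) - y) 0 ∂ν := by
    have : (q:ℝ) - m = ∫ y, ((q:ℝ) - y) ∂ν := by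
      rw [integral_sub (integrable_const _) (integrable_id_of_sq h2), integral_const]
      simp [hm]
    rw [this]
    exact integral_mono ((integrable_const _).sub (integrable_id_of_sq h2))
      (integrable_max_right h2 _) fun y => le_max_left _ _
  have h1τ : (0:ℝ) < 1 - τ := by linarith
  have key : τ * c ≤ (1 - τ) * ((q:ℝ) - m) := by
    rw [← div_le_iff₀' h1τ] at *
    nlinarith [hqm]
  nlinarith [hA, hB]

lemma Qset_bddBelow (hτ0 : 0 < τ) (hτ1 : τ < 1)
    (h2 : Integrable (fun y : ℝ => y ^ 2) ν) : BddBelow (Qset τ ν) := by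
  set m := ∫ y, y ∂ν with hm
  set c := ∫ y, |y| ∂ν with hc
  have hc0 : 0 ≤ c := integral_nonneg fun y => abs_nonneg y
  refine ⟨min 0 (m - (1 - τ) * c / τ), fun x hx => ?_⟩
  rcases le_total 0 x with h0x | h0x
  · exact le_trans (min_le_left _ _) h0x
  · have hH := (mem_Qset_iff hτ0 hτ1 h2 x).mp hx
    unfold Hfun at hH
    have hA : m - x ≤ ∫ y, max (y - x) 0 ∂ν := by
      have : m - x = ∫ y, (y - x) ∂ν := by
        rw [integral_sub (integrable_id_of_sq h2) (integrable_const _), integral_const]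
        simp [hm]
      rw [this]
      exact integral_mono ((integrable_id_of_sq h2).sub (integrable_const _))
        (integrable_max_left h2 _) fun y => le_max_left _ _
    have hB : ∫ y, max (x - y) 0 ∂ν ≤ c := by
      refine integral_mono (integrable_max_right h2 _) (integrable_abs_of_sq h2) fun y => ?_
      rcases le_total (x - y) 0 with h | h
      · rw [max_eq_right h]; exact abs_nonneg y
      · rw [max_eq_left h]
        have := neg_le_abs y
        linarith
    have hxB : τ * (m - x) ≤ (1 - τ) * c := by
      nlinarith [hA, hB]
    have : m - (1 - τ) * c / τ ≤ x := by
      have hdiv : (1 - τ) * c / τ ≥ m - x := by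
        rw [ge_iff_le, le_div_iff₀ hτ0]
        nlinarith [hxB]
      linarith
    exact le_trans (min_le_right _ _) this
end Qset

section ExpectileChar

variable {τ : ℝ} {ν : MeasureTheory.Measure ℝ} [IsProbabilityMeasure ν]

lemma isExpectile_integrable_sq (hτ0 : 0 < τ) (hτ1 : τ < 1) {a : ℝ}
    (hexp : IsExpectile τ ν a) : Integrable (fun y : ℝ => y ^ 2) ν := by
  set mτ := min τ (1 - τ) with hmτ
  have hmτ0 : 0 < mτ := lt_min hτ0 (by linarith)
  have hdm : (2 / mτ) * mτ = 2 := by field_simp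
  by_cases hia : Integrable (fun y : ℝ => phiLoss τ (y - a)) ν
  · refine Integrable.mono' ((hia.const_mul (2 / mτ)).add (integrable_const (2 * a ^ 2)))
      ((measurable_id.pow_const 2).aestronglyMeasurable) ?_
    refine Filter.Eventually.of_forall fun y => ?_
    simp only [Pi.add_apply]
    rw [Real.norm_eq_abs, abs_of_nonneg (sq_nonneg y)]
    have h1 := min_sq_le_phiLoss (τ := τ) (y - a)
    rw [← hmτ] at h1
    have h3 : (0:ℝ) < 2 / mτ := by positivity
    have h4 : 2 * (y - a) ^ 2 ≤ 2 / mτ * phiLoss τ (y - a) := by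
      calc 2 * (y - a) ^ 2 = 2 / mτ * mτ * (y - a) ^ 2 := by rw [hdm]
        _ = 2 / mτ * (mτ * (y - a) ^ 2) := by ring
        _ ≤ 2 / mτ * phiLoss τ (y - a) := mul_le_mul_of_nonneg_left h1 h3.le
    nlinarith [sq_nonneg (y - 2 * a), h4]
  · exfalso
    have hall : ∀ b : ℝ, ¬ Integrable (fun y : ℝ => phiLoss τ (y - b)) ν := by
      intro b hb
      refine hia (Integrable.mono' ((hb.const_mul (2 / mτ)).add (integrable_const (2 * (b - a) ^ 2)))
        (measurable_phiLoss.comp (measurable_id.sub_const a)).aestronglyMeasurable ?_)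
      refine Filter.Eventually.of_forall fun y => ?_
      simp only [Pi.add_apply]
      rw [Real.norm_eq_abs, abs_of_nonneg (phiLoss_nonneg hτ0 hτ1 _)]
      have h1 := min_sq_le_phiLoss (τ := τ) (y - b)
      rw [← hmτ] at h1
      have h2 := phiLoss_le_sq hτ0 hτ1 (y - a)
      have h3 : (0:ℝ) < 2 / mτ := by positivity
      have h4 : 2 * (y - b) ^ 2 ≤ 2 / mτ * phiLoss τ (y - b) := by
        calc 2 * (y - b) ^ 2 = 2 / mτ * mτ * (y - b) ^ 2 := by rw [hdm]
          _ = 2 / mτ * (mτ * (y - b) ^ 2) := by ring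
          _ ≤ 2 / mτ * phiLoss τ (y - b) := mul_le_mul_of_nonneg_left h1 h3.le
      nlinarith [sq_nonneg (y - 2 * b + a), h4]
    have h1 : ∫ y, phiLoss τ (y - a) ∂ν = 0 := integral_undef (hall a)
    have h2 : ∫ y, phiLoss τ (y - (a + 1)) ∂ν = 0 := integral_undef (hall (a + 1))
    have := hexp (a + 1) (by linarith)
    rw [h1, h2] at this
    exact lt_irrefl 0 this

lemma isExpectile_Qset_eq_Ici (hτ0 : 0 < τ) (hτ1 : τ < 1) {a : ℝ}
    (hexp : IsExpectile τ ν a) : Qset τ ν = Set.Ici a := by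
  have h2 := isExpectile_integrable_sq hτ0 hτ1 hexp
  set Mτ := max τ (1 - τ) with hMτ
  set mτ := min τ (1 - τ) with hmτ
  have hM0 : 0 < Mτ := lt_of_lt_of_le hτ0 (le_max_left _ _)
  have hm0 : 0 < mτ := lt_min hτ0 (by linarith)
  have hRlt : ∀ b : ℝ, b ≠ a → Rfun τ ν a < Rfun τ ν b := fun b hb => hexp b hb
  have hHa_nonneg : 0 ≤ Hfun τ ν a := by
    by_contra hneg
    push_neg at hneg
    set h₀ := -Hfun τ ν a / (2 * Mτ) with hh₀
    have hh₀0 : 0 < h₀ := by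
      apply div_pos (by linarith) (by linarith)
    have hMh : Mτ * h₀ = -Hfun τ ν a / 2 := by
      rw [hh₀]; field_simp
    have hlip := (Hfun_lip hτ0 hτ1 h2 (by linarith : a ≤ a + h₀)).2
    have hHx : Hfun τ ν (a + h₀) ≤ Hfun τ ν a / 2 := by
      have : Mτ * (a + h₀ - a) = Mτ * h₀ := by ring_nf
      rw [this, hMh] at hlip
      linarith
    have hgr := gradR' hτ0 hτ1 h2 a h₀
    have hlt : Rfun τ ν a < Rfun τ ν (a + h₀) := hRlt _ (by linarith)
    nlinarith [hgr, hHx, hlt, hh₀0]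
  have hHa_nonpos : Hfun τ ν a ≤ 0 := by
    by_contra hpos
    push_neg at hpos
    set h₀ := Hfun τ ν a / (2 * Mτ) with hh₀
    have hh₀0 : 0 < h₀ := div_pos hpos (by linarith)
    have hMh : Mτ * h₀ = Hfun τ ν a / 2 := by
      rw [hh₀]; field_simp
    have hlip := (Hfun_lip hτ0 hτ1 h2 (by linarith : a - h₀ ≤ a)).2
    have hHx : Hfun τ ν a / 2 ≤ Hfun τ ν (a - h₀) := by
      have : Mτ * (a - (a - h₀)) = Mτ * h₀ := by ring_nf
      rw [this, hMh] at hlip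
      linarith
    have hgr := gradR hτ0 hτ1 h2 (a - h₀) h₀
    have harg : a - h₀ + h₀ = a := by ring
    rw [harg] at hgr
    have hlt : Rfun τ ν a < Rfun τ ν (a - h₀) := hRlt _ (by linarith)
    nlinarith [hgr, hHx, hlt, hh₀0]
  ext x
  rw [mem_Qset_iff hτ0 hτ1 h2 x, Set.mem_Ici]
  constructor
  · intro hH
    by_contra hax
    push_neg at hax
    have hlip := (Hfun_lip hτ0 hτ1 h2 hax.le).1
    nlinarith [hlip, hm0]
  · intro hax
    have hlip := (Hfun_lip hτ0 hτ1 h2 hax).1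
    nlinarith [hlip, hm0, mul_nonneg hm0.le (by linarith : (0:ℝ) ≤ x - a)]

lemma isExpectile_spec (hτ0 : 0 < τ) (hτ1 : τ < 1) {a : ℝ} (hexp : IsExpectile τ ν a) :
    (∫⁻ y, ENNReal.ofReal (y ^ 2) ∂ν) < ⊤ ∧ sInf (Qset τ ν) = a := by
  refine ⟨lintegral_sq_lt_top_of_integrable (isExpectile_integrable_sq hτ0 hτ1 hexp), ?_⟩
  rw [isExpectile_Qset_eq_Ici hτ0 hτ1 hexp]
  exact csInf_Ici

end ExpectileChar

section MeasurableExpFun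

open ProbabilityTheory

lemma measurable_expFun (hτ0 : 0 < τ) (hτ1 : τ < 1) {α : Type*} [MeasurableSpace α]
    (κ : Kernel α ℝ) [IsMarkovKernel κ] : Measurable (expFun τ κ) := by
  have hm2 : Measurable (fun z => ∫⁻ y, ENNReal.ofReal (y ^ 2) ∂(κ z)) :=
    (Measure.measurable_lintegral (ENNReal.measurable_ofReal.comp
      (measurable_id.pow_const 2))).comp κ.measurable
  have hG : MeasurableSet {z | ∫⁻ y, ENNReal.ofReal (y ^ 2) ∂(κ z) < ⊤} :=
    measurableSet_lt hm2 measurable_const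
  have hQ : ∀ x : ℝ, MeasurableSet {z | x ∈ Qset τ (κ z)} := by
    intro x
    exact measurableSet_le
      ((measurable_const.mul (Measure.measurable_lintegral
        (ENNReal.measurable_ofReal.comp (measurable_id.sub_const x)))).comp κ.measurable)
      ((measurable_const.mul (Measure.measurable_lintegral
        (ENNReal.measurable_ofReal.comp ((measurable_const.sub measurable_id))))).comp
        κ.measurable)
  refine measurable_of_Iio fun t => ?_
  have hset : expFun τ κ ⁻¹' Set.Iio t =
      ({z | ∫⁻ y, ENNReal.ofReal (y ^ 2) ∂(κ z) < ⊤} ∩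
        ⋃ (q : ℚ) (_ : (q : ℝ) < t), {z | (q : ℝ) ∈ Qset τ (κ z)}) ∪
      ({z | ∫⁻ y, ENNReal.ofReal (y ^ 2) ∂(κ z) < ⊤}ᶜ ∩ {z | (0:ℝ) < t}) := by
    ext z
    simp only [Set.mem_preimage, Set.mem_Iio, Set.mem_union, Set.mem_inter_iff, Set.mem_iUnion,
      Set.mem_compl_iff, Set.mem_setOf_eq]
    unfold expFun
    by_cases hz : ∫⁻ y, ENNReal.ofReal (y ^ 2) ∂(κ z) < ⊤
    · rw [if_pos hz]
      have h2 : Integrable (fun y : ℝ => y ^ 2) (κ z) := integrable_sq_of_lintegral_sq_lt_top hz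
      have hne : (Qset τ (κ z)).Nonempty := by
        obtain ⟨q, hq⟩ := Qset_nonempty_rat hτ0 hτ1 h2
        exact ⟨q, hq⟩
      have hbdd := Qset_bddBelow hτ0 hτ1 h2
      constructor
      · intro hlt
        rw [csInf_lt_iff hbdd hne] at hlt
        obtain ⟨b, hb, hbt⟩ := hlt
        obtain ⟨q, hq1, hq2⟩ := exists_rat_btwn hbt
        exact Or.inl ⟨hz, q, hq2, Qset_upclosed hb hq1.le⟩
      · rintro (⟨-, q, hqt, hq⟩ | ⟨habs, -⟩)
        · exact lt_of_le_of_lt (csInf_le hbdd hq) hqt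
        · exact absurd hz habs
    · rw [if_neg hz]
      constructor
      · intro h0t
        exact Or.inr ⟨hz, h0t⟩
      · rintro (⟨habs, -⟩ | ⟨-, h0t⟩)
        · exact absurd habs hz
        · exact h0t
  rw [hset]
  refine MeasurableSet.union (hG.inter ?_) (hG.compl.inter ?_)
  · exact MeasurableSet.iUnion fun q => MeasurableSet.iUnion fun _ => hQ q
  · rcases lt_or_ge 0 t with h | h
    · simp only [h, Set.setOf_true]; exact MeasurableSet.univ
    · simp only [not_lt.mpr h, Set.setOf_false]; exact MeasurableSet.empty

end MeasurableExpFun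

section CondIndepPart

open ProbabilityTheory MeasureTheory

variable {Ω β γ : Type*} [mΩ : MeasurableSpace Ω] [StandardBorelSpace Ω]
  {mβ : MeasurableSpace β} {mγ : MeasurableSpace γ}
  (P : Measure Ω) [IsProbabilityMeasure P]

lemma condexp_eq_of_condIndepFun {X : Ω → β} {Z : Ω → γ} (hX : Measurable X)
    (hm'X : mγ.comap Z ≤ mβ.comap X) (hm' : mγ.comap Z ≤ mΩ) {Y : Ω → ℝ} (hY : Measurable Y)
    (hYX : CondIndepFun (mγ.comap Z) hm' Y X P) {s : Set ℝ} (hs : MeasurableSet s) :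
    P⟦Y ⁻¹' s | mβ.comap X⟧ =ᵐ[P] P⟦Y ⁻¹' s | mγ.comap Z⟧ := by
  have hmX : mβ.comap X ≤ mΩ := hX.comap_le
  have hind := (condIndepFun_iff_condExp_inter_preimage_eq_mul hY hX).mp hYX
  refine (ae_eq_condExp_of_forall_setIntegral_eq hmX
    ((integrable_const (1:ℝ)).indicator (hY hs))
    (fun t _ _ => integrable_condExp.integrableOn)
    (fun t ht _ => ?_)
    (StronglyMeasurable.aestronglyMeasurable (stronglyMeasurable_condExp.mono hm'X))).symm
  obtain ⟨u, hu, rfl⟩ := ht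
  set f := P⟦Y ⁻¹' s | mγ.comap Z⟧ with hf
  set g : Ω → ℝ := (X ⁻¹' u).indicator (fun _ => (1:ℝ)) with hg
  have hint_g : Integrable g P := (integrable_const (1:ℝ)).indicator (hX hu)
  have hint_fg : Integrable (f * g) P := by
    refine Integrable.congr (Integrable.bdd_mul (integrable_condExp : Integrable f P)
      hint_g.aestronglyMeasurable (c := 1) (Filter.Eventually.of_forall fun x => ?_)) (Filter.Eventually.of_forall fun x => ?_)
    · rw [hg]
      rcases Set.indicator_eq_zero_or_self (X ⁻¹' u) (fun _ => (1:ℝ)) x with h | h <;>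
        rw [h] <;> simp
    · exact mul_comm _ _
  have hmul := condExp_mul_of_stronglyMeasurable_left stronglyMeasurable_condExp hint_fg hint_g
  calc ∫ x in X ⁻¹' u, f x ∂P
      = ∫ x, (f * g) x ∂P := by
        rw [← integral_indicator (hX hu)]
        refine integral_congr_ae (Filter.Eventually.of_forall fun x => ?_)
        simp only [Pi.mul_apply, hg]
        by_cases hx : x ∈ X ⁻¹' u <;> simp [hx]
    _ = ∫ x, (P[f * g | mγ.comap Z]) x ∂P := (integral_condExp hm').symm
    _ = ∫ x, (f * P[g | mγ.comap Z]) x ∂P := integral_congr_ae hmul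
    _ = ∫ x, (P⟦Y ⁻¹' s ∩ X ⁻¹' u | mγ.comap Z⟧) x ∂P := by
        refine integral_congr_ae ((hind s u hs hu).symm.mono fun x hx => ?_)
        simpa using hx
    _ = ∫ x, (Y ⁻¹' s ∩ X ⁻¹' u).indicator (fun _ => (1:ℝ)) x ∂P := integral_condExp hm'
    _ = ∫ x in X ⁻¹' u, (Y ⁻¹' s).indicator (fun _ => (1:ℝ)) x ∂P := by
        rw [integral_indicator ((hY hs).inter (hX hu)), setIntegral_indicator (hY hs),
          setIntegral_const, setIntegral_const, Set.inter_comm]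

lemma condDistrib_eq_comp {X : Ω → β} {Z : Ω → γ} {Y : Ω → ℝ} (hX : Measurable X)
    (hZ : Measurable Z) (hY : Measurable Y)
    (hm'X : mγ.comap Z ≤ mβ.comap X) (hm' : mγ.comap Z ≤ mΩ)
    (hYX : CondIndepFun (mγ.comap Z) hm' Y X P) :
    ∀ᵐ ω ∂P, condDistrib Y X P (X ω) = condDistrib Y Z P (Z ω) := by
  have hq : ∀ q : ℚ, ∀ᵐ ω ∂P,
      condDistrib Y X P (X ω) (Set.Iic (q:ℝ)) = condDistrib Y Z P (Z ω) (Set.Iic (q:ℝ)) := by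
    intro q
    have e1 := condDistrib_ae_eq_condExp (μ := P) hX hY
      (measurableSet_Iic : MeasurableSet (Set.Iic (q:ℝ)))
    have e2 := condDistrib_ae_eq_condExp (μ := P) hZ hY
      (measurableSet_Iic : MeasurableSet (Set.Iic (q:ℝ)))
    have e3 := condexp_eq_of_condIndepFun P hX hm'X hm' hY hYX
      (measurableSet_Iic : MeasurableSet (Set.Iic (q:ℝ)))

    filter_upwards [e1, e2, e1.trans (e3.trans e2.symm)] with ω _ _ h
    exact (ENNReal.toReal_eq_toReal_iff' (measure_ne_top _ _) (measure_ne_top _ _)).mp h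
  rw [← ae_all_iff] at hq
  filter_upwards [hq] with ω h
  haveI : IsProbabilityMeasure (condDistrib Y X P (X ω)) := inferInstance
  refine ext_of_generate_finite _
    (BorelSpace.measurable_eq.trans Real.borel_eq_generateFrom_Iic_rat) Real.isPiSystem_Iic_rat
    ?_ ?_
  · rintro t ht
    simp only [Set.mem_iUnion, Set.mem_singleton_iff] at ht
    obtain ⟨q, rfl⟩ := ht
    exact h q
  · simp [measure_univ]

end CondIndepPart

section Final

open ProbabilityTheory MeasureTheory

variable {Ω β γ : Type*} [mΩ : MeasurableSpace Ω] [StandardBorelSpace Ω]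
  {mβ : MeasurableSpace β} {mγ : MeasurableSpace γ}
  (P : Measure Ω) [IsProbabilityMeasure P]

lemma condIndepFun_of_ae_comp {X : Ω → β} {Z : Ω → γ} {W : Ω → ℝ} {g : γ → ℝ}
    (hX : Measurable X) (hW : Measurable W) (hg : Measurable g)
    (hm : mγ.comap Z ≤ mΩ) (hWZ : W =ᵐ[P] fun ω => g (Z ω)) :
    CondIndepFun (mγ.comap Z) hm W X P := by
  rw [condIndepFun_iff_condExp_inter_preimage_eq_mul hW hX]
  intro s t hs ht
  set A := Z ⁻¹' (g ⁻¹' s) with hA_def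
  have hA : MeasurableSet[mγ.comap Z] A := ⟨g ⁻¹' s, hg hs, rfl⟩
  have hind1 : (W ⁻¹' s ∩ X ⁻¹' t).indicator (fun _ => (1:ℝ)) =ᵐ[P]
      (A ∩ X ⁻¹' t).indicator (fun _ => (1:ℝ)) := by
    filter_upwards [hWZ] with ω hω
    classical
    rw [Set.indicator_apply, Set.indicator_apply]
    simp only [Set.mem_inter_iff, Set.mem_preimage, hω]
    rfl
  have hind2 : (W ⁻¹' s).indicator (fun _ => (1:ℝ)) =ᵐ[P] A.indicator (fun _ => (1:ℝ)) := by
    filter_upwards [hWZ] with ω hω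
    classical
    rw [Set.indicator_apply, Set.indicator_apply]
    simp only [Set.mem_preimage, hω]
    rfl
  have hint_t : Integrable ((X ⁻¹' t).indicator (fun _ => (1:ℝ))) P :=
    (integrable_const (1:ℝ)).indicator (hX ht)
  have e1 : P⟦W ⁻¹' s ∩ X ⁻¹' t | mγ.comap Z⟧ =ᵐ[P]
      A.indicator (P⟦X ⁻¹' t | mγ.comap Z⟧) := by
    refine (condExp_congr_ae hind1).trans ?_
    have : (A ∩ X ⁻¹' t).indicator (fun _ => (1:ℝ)) =
        A.indicator ((X ⁻¹' t).indicator (fun _ => (1:ℝ))) := (Set.indicator_indicator _ _ _).symm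
    rw [this]
    exact condExp_indicator hint_t hA
  have e2 : P⟦W ⁻¹' s | mγ.comap Z⟧ =ᵐ[P] A.indicator (fun _ => (1:ℝ)) := by
    refine (condExp_congr_ae hind2).trans ?_
    rw [condExp_of_stronglyMeasurable hm
      (stronglyMeasurable_const.indicator hA) ((integrable_const (1:ℝ)).indicator (hm _ hA))]
  filter_upwards [e1, e2] with ω h1 h2
  rw [h1, h2]
  by_cases hω : ω ∈ A <;> simp [hω]

end Final

/-- If `Y ⫫ X | BᵀX`, then for each fixed `0 < τ < 1` the conditional expectile `f_τ(X)`
is conditionally independent of `X` given `BᵀX`. -/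
theorem statement2
    {Ω : Type*} [mΩ : MeasurableSpace Ω] [StandardBorelSpace Ω] [Nonempty Ω]
    (P : Measure Ω) [IsProbabilityMeasure P]
    {p d : ℕ}
    (X : Ω → Fin p → ℝ) (hXmeas : Measurable X) (hX2 : MemLp X 2 P)
    (Y : Ω → ℝ) (hYmeas : Measurable Y) (hY2 : MemLp Y 2 P)
    (B : Matrix (Fin p) (Fin d) ℝ) (hBrank : B.rank = d)
    (hm : MeasurableSpace.comap (fun ω => Bᵀ.mulVec (X ω)) inferInstance ≤ mΩ)
    (hYX : CondIndepFun (MeasurableSpace.comap (fun ω => Bᵀ.mulVec (X ω)) inferInstance) hm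
      Y X P)
    (τ : ℝ) (hτ0 : 0 < τ) (hτ1 : τ < 1)
    (f : (Fin p → ℝ) → ℝ) (hfmeas : Measurable f)
    (hexp : ∀ᵐ x ∂(P.map X), IsExpectile τ (condDistrib Y X P x) (f x)) :
    CondIndepFun (MeasurableSpace.comap (fun ω => Bᵀ.mulVec (X ω)) inferInstance) hm
      (fun ω => f (X ω)) X P := by
  have hmv : Measurable (fun v : Fin p → ℝ => Bᵀ.mulVec v) := by
    apply measurable_pi_lambda
    intro i
    simp only [Matrix.mulVec, dotProduct]
    exact Finset.measurable_sum _ fun j _ => ((measurable_pi_apply j).const_mul _)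
  have hZmeas : Measurable (fun ω => Bᵀ.mulVec (X ω)) := hmv.comp hXmeas
  have hm'X : MeasurableSpace.comap (fun ω => Bᵀ.mulVec (X ω)) inferInstance ≤
      MeasurableSpace.comap X inferInstance := by
    rintro t ⟨u, hu, rfl⟩
    exact ⟨(fun v : Fin p → ℝ => Bᵀ.mulVec v) ⁻¹' u, hmv hu, rfl⟩
  have step2 := condDistrib_eq_comp P hXmeas hZmeas hYmeas hm'X hm hYX
  have hexp' : ∀ᵐ ω ∂P, IsExpectile τ (condDistrib Y X P (X ω)) (f (X ω)) :=
    ae_of_ae_map hXmeas.aemeasurable hexp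
  have hWZ : (fun ω => f (X ω)) =ᵐ[P]
      fun ω => expFun τ (condDistrib Y (fun ω' => Bᵀ.mulVec (X ω')) P) (Bᵀ.mulVec (X ω)) := by
    filter_upwards [step2, hexp'] with ω h2 h1
    rw [h2] at h1
    obtain ⟨hfin, hinf⟩ := isExpectile_spec hτ0 hτ1 h1
    unfold expFun
    rw [if_pos hfin, hinf]
  exact condIndepFun_of_ae_comp P hXmeas (hfmeas.comp hXmeas)
    (measurable_expFun hτ0 hτ1 _) hm hWZ
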